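/- Let n ≥ 3 and let d = ⌊n/2⌋ be the diameter of the cycle graph C_n. Then every edge of C_n is contained in exactly d(d+1)/2 geodesic paths of C_n. -/

import Mathlib

open SimpleGraph Finset

/-- A walk in `G` is a *geodesic walk* if it is a nontrivial path whose length equals
the distance in `G` between its endpoints. -/
def SimpleGraph.IsGeodesicWalk {V : Type*} (G : SimpleGraph V) {u v : V}
    (p : G.Walk u v) : Prop :=
  p.IsPath ∧ p.length = G.dist u v ∧ 0 < p.length

/-- The geodesic paths of `G`, where a path and its reverse are identified by
recording the (finite) set of edges of the path.  (A nontrivial path is determined,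
up to reversal, by its edge set.) -/
def SimpleGraph.geodesicPathSets {V : Type*} [DecidableEq V] (G : SimpleGraph V) :
    Set (Finset (Sym2 V)) :=
  {S | ∃ (u v : V) (p : G.Walk u v), G.IsGeodesicWalk p ∧ p.edges.toFinset = S}

/-- The geodesic path number `t_gp(G)`: the number of geodesic paths of `G`. -/
noncomputable def SimpleGraph.tgp {V : Type*} [DecidableEq V] (G : SimpleGraph V) : ℕ :=
  G.geodesicPathSets.ncard

/-- `f` is a geodesic Leech labeling of `G`: an edge labeling by positive integers such
that the weights of the geodesic paths of `G` are exactly `1, 2, …, t_gp(G)`,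
each occurring exactly once. -/
def SimpleGraph.IsGeodesicLeechLabeling {V : Type*} [DecidableEq V] (G : SimpleGraph V)
    (f : Sym2 V → ℕ) : Prop :=
  (∀ e ∈ G.edgeSet, 1 ≤ f e) ∧
    Set.BijOn (fun S => ∑ e ∈ S, f e) G.geodesicPathSets (Set.Icc 1 G.tgp)


open Fin.NatCast Fin.CommRing

namespace CycleAux

variable {n : ℕ}

lemma val_natCast_of_lt [NeZero n] {k : ℕ} (hk : k < n) : ((k : Fin n) : ℕ) = k := by
  simp [Fin.val_natCast, Nat.mod_eq_of_lt hk]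

lemma natCast_inj_of_lt [NeZero n] {k k' : ℕ} (hk : k < n) (hk' : k' < n)
    (h : (k : Fin n) = (k' : Fin n)) : k = k' := by
  have := congrArg Fin.val h
  rwa [val_natCast_of_lt hk, val_natCast_of_lt hk'] at this

lemma val_one_of (hn : 2 ≤ n) :
    haveI : NeZero n := ⟨by omega⟩
    ((1 : Fin n) : ℕ) = 1 := by
  haveI : NeZero n := ⟨by omega⟩
  rw [Fin.val_one']; exact Nat.mod_eq_of_lt (by omega)

lemma val_neg_of_ne_zero [NeZero n] {a : Fin n} (h : a ≠ 0) : ((-a : Fin n) : ℕ) = n - a.val := by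
  have h1 : (0:ℕ) < a.val := by
    rcases Nat.eq_zero_or_pos a.val with h0 | h0
    · exact absurd (Fin.ext h0) h
    · exact h0
  rw [Fin.neg_def]
  exact Nat.mod_eq_of_lt (by omega)

lemma pos_val_of_ne_zero [NeZero n] {a : Fin n} (h : a ≠ 0) : (0:ℕ) < a.val := by
  rcases Nat.eq_zero_or_pos a.val with h0 | h0
  · exact absurd (Fin.ext h0) h
  · exact h0

lemma min_step (hn : 2 ≤ n) (a : Fin n) :
    haveI : NeZero n := ⟨by omega⟩
    min ((a+1 : Fin n) : ℕ) ((-(a+1) : Fin n) : ℕ) ≤ min (a : ℕ) ((-a : Fin n) : ℕ) + 1 := by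
  haveI : NeZero n := ⟨by omega⟩
  have ha : (a:ℕ) < n := a.isLt
  have h1v : ((1:Fin n) : ℕ) = 1 := val_one_of hn
  by_cases h0 : a = 0
  · subst h0
    have h1 : ((0:Fin n) + 1 : Fin n) = 1 := by ring
    rw [h1]
    have h3 : ((1:Fin n)) ≠ 0 := by
      intro h; rw [h] at h1v; simp at h1v
    have := val_neg_of_ne_zero h3
    simp only [Fin.val_zero]
    omega
  · by_cases h1 : a + 1 = 0
    · rw [h1]; simp
    · have hv0 := pos_val_of_ne_zero h0
      have hva : ((a+1 : Fin n) : ℕ) = (a.val + 1) % n := by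
        rw [Fin.val_add, h1v]
      have hne : a.val + 1 ≠ n := by
        intro heq
        apply h1
        ext
        rw [hva, heq, Nat.mod_self]
        rfl
      have hva' : ((a+1 : Fin n) : ℕ) = a.val + 1 := by
        rw [hva, Nat.mod_eq_of_lt (by omega)]
      have h2 := val_neg_of_ne_zero h0
      have h3 := val_neg_of_ne_zero h1
      rw [hva'] at h3 ⊢
      omega


lemma toFinset_map_list {α β : Type*} [DecidableEq α] [DecidableEq β] (f : α → β) (l : List α) :
    (l.map f).toFinset = l.toFinset.image f := by
  ext x; simp

lemma toFinset_range (m : ℕ) : (List.range m).toFinset = Finset.range m := by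
  ext x; simp

section Walks

variable [NeZero n]

lemma adj_succ (hn : 2 ≤ n) (u : Fin n) : (cycleGraph n).Adj u (u + 1) := by
  rw [cycleGraph_adj']
  right
  rw [add_sub_cancel_left]
  exact val_one_of hn

/-- The arc walk `u, u+1, …, u+ℓ`. -/
def arcWalk (hn : 2 ≤ n) (u : Fin n) : (ℓ : ℕ) → (cycleGraph n).Walk u (u + (ℓ : Fin n))
  | 0 => SimpleGraph.Walk.nil.copy rfl (by simp)
  | (ℓ+1) => (SimpleGraph.Walk.cons (adj_succ hn u) (arcWalk hn (u + 1) ℓ)).copy rfl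
      (by push_cast; ring)

@[simp] lemma arcWalk_length (hn : 2 ≤ n) (u : Fin n) (ℓ : ℕ) :
    (arcWalk hn u ℓ).length = ℓ := by
  induction ℓ generalizing u with
  | zero => simp [arcWalk]
  | succ ℓ ih => simp [arcWalk, ih]

lemma arcWalk_support (hn : 2 ≤ n) (u : Fin n) (ℓ : ℕ) :
    (arcWalk hn u ℓ).support = (List.range (ℓ+1)).map (fun k : ℕ => u + (k : Fin n)) := by
  induction ℓ generalizing u with
  | zero =>
      rw [show List.range 1 = [0] from rfl]
      simp [arcWalk]
  | succ ℓ ih =>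
      simp only [arcWalk, SimpleGraph.Walk.support_copy, SimpleGraph.Walk.support_cons, ih]
      conv_rhs => rw [List.range_succ_eq_map, List.map_cons, List.map_map]
      congr 1
      · simp
      · apply List.map_congr_left
        intro k _
        simp only [Function.comp_apply, Nat.succ_eq_add_one]
        push_cast
        ring

lemma arcWalk_edges (hn : 2 ≤ n) (u : Fin n) (ℓ : ℕ) :
    (arcWalk hn u ℓ).edges = (List.range ℓ).map (fun k : ℕ => s(u + (k : Fin n), u + (k : Fin n) + 1)) := by
  induction ℓ generalizing u with
  | zero =>
      simp [arcWalk]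
  | succ ℓ ih =>
      simp only [arcWalk, SimpleGraph.Walk.edges_copy, SimpleGraph.Walk.edges_cons, ih]
      conv_rhs => rw [List.range_succ_eq_map, List.map_cons, List.map_map]
      congr 1
      · simp
      · apply List.map_congr_left
        intro k _
        simp only [Function.comp_apply, Nat.succ_eq_add_one]
        push_cast
        rw [Sym2.eq_iff]; left; constructor <;> ring

lemma walk_length_lower (hn : 2 ≤ n) {u v : Fin n} (p : (cycleGraph n).Walk u v) :
    min ((v - u : Fin n) : ℕ) ((u - v : Fin n) : ℕ) ≤ p.length := by
  induction p with
  | nil => simp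
  | @cons u w v h q ih =>
      rw [SimpleGraph.Walk.length_cons]
      rcases cycleGraph_adj'.mp h with h' | h'
      · -- (u - w).val = 1, so u = w + 1
        have hu : u = w + 1 := by
          have h1 : u - w = 1 := Fin.ext (by rw [h', val_one_of hn])
          have := sub_eq_iff_eq_add.mp h1
          rw [this]; ring
        subst hu
        have e1 : v - (w + 1) = -((w - v) + 1) := by ring
        have e2 : (w + 1) - v = (w - v) + 1 := by ring
        rw [e1, e2]
        have hstep := min_step hn (w - v)
        rw [neg_sub] at hstep
        omega
      · -- (w - u).val = 1, so w = u + 1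
        have hw : w = u + 1 := by
          have h1 : w - u = 1 := Fin.ext (by rw [h', val_one_of hn])
          have := sub_eq_iff_eq_add.mp h1
          rw [this]; ring
        subst hw
        have e1 : v - u = (v - (u + 1)) + 1 := by ring
        have e2 : u - v = -((v - (u + 1)) + 1) := by ring
        rw [e1, e2]
        have hstep := min_step hn (v - (u + 1))
        rw [neg_sub] at hstep
        omega

lemma arcWalk_to (hn : 2 ≤ n) (u v : Fin n) :
    ∃ p : (cycleGraph n).Walk u v, p.length = ((v - u : Fin n) : ℕ) := by
  have hend : u + (((v - u : Fin n) : ℕ) : Fin n) = v := by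
    rw [Fin.cast_val_eq_self]; ring
  exact ⟨(arcWalk hn u ((v - u : Fin n) : ℕ)).copy rfl hend, by
    rw [SimpleGraph.Walk.length_copy, arcWalk_length]⟩

lemma dist_eq (hn : 2 ≤ n) (u v : Fin n) :
    (cycleGraph n).dist u v = min ((v - u : Fin n) : ℕ) ((u - v : Fin n) : ℕ) := by
  obtain ⟨p, hp⟩ := arcWalk_to hn u v
  obtain ⟨p', hp'⟩ := arcWalk_to hn v u
  apply le_antisymm
  · rw [le_min_iff]
    constructor
    · exact hp ▸ SimpleGraph.dist_le p
    · rw [SimpleGraph.dist_comm]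
      exact hp' ▸ SimpleGraph.dist_le p'
  · have hr : (cycleGraph n).Reachable u v := ⟨p⟩
    obtain ⟨q, hq⟩ := hr.exists_walk_length_eq_dist
    rw [← hq]
    exact walk_length_lower hn q

lemma min_le_half (a : Fin n) :
    min (a : ℕ) ((-a : Fin n) : ℕ) ≤ n / 2 := by
  by_cases h : a = 0
  · subst h; simp
  · have h1 := val_neg_of_ne_zero h
    have h2 := pos_val_of_ne_zero h
    have := a.isLt
    omega

lemma path_struct (hn : 2 ≤ n) {u v : Fin n} (p : (cycleGraph n).Walk u v) :
    p.IsPath →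
    (v = u + (p.length : Fin n) ∧
      p.support = (List.range (p.length+1)).map (fun k : ℕ => u + (k : Fin n)) ∧
      p.edges = (List.range p.length).map (fun k : ℕ => s(u + (k : Fin n), u + (k : Fin n) + 1)))
    ∨ (u = v + (p.length : Fin n) ∧
      p.support = (List.range (p.length+1)).map (fun k : ℕ => u - (k : Fin n)) ∧
      p.edges = (List.range p.length).map (fun k : ℕ => s(u - (k : Fin n), u - (k : Fin n) - 1))) := by
  induction p with
  | nil =>
      intro _
      left
      simp only [SimpleGraph.Walk.length_nil, SimpleGraph.Walk.support_nil,
        SimpleGraph.Walk.edges_nil, List.range_zero, List.map_nil]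
      refine ⟨by simp, ?_, trivial⟩
      rw [show List.range (0+1) = [0] from rfl]
      simp
  | @cons u w v h q ih =>
      intro hp
      rw [SimpleGraph.Walk.cons_isPath_iff] at hp
      obtain ⟨hq, hu_not⟩ := hp
      have hlen : (SimpleGraph.Walk.cons h q).length = q.length + 1 :=
        SimpleGraph.Walk.length_cons _ _
      rcases cycleGraph_adj'.mp h with h' | h'
      · -- (u - w).val = 1, so u = w + 1
        have hu : u = w + 1 := by
          have h1 : u - w = 1 := Fin.ext (by rw [h', val_one_of hn])
          have := sub_eq_iff_eq_add.mp h1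
          rw [this]; ring
        rcases ih hq with ⟨hv, hsup, hedg⟩ | ⟨hv, hsup, hedg⟩
        · -- q increasing from w; turning back
          rcases Nat.eq_zero_or_pos q.length with hL | hL
          · rw [hL] at hv hsup hedg
            have hvw : v = w := by push_cast at hv; linear_combination hv
            right
            rw [hlen, hL]
            refine ⟨by push_cast; linear_combination hu - hvw, ?_, ?_⟩
            · rw [SimpleGraph.Walk.support_cons, hsup]
              rw [show List.range (0+1) = [0] from rfl, show List.range (0+1+1) = [0,1] from rfl]
              simp only [List.map_cons, List.map_nil, List.cons.injEq, and_true]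
              refine ⟨by push_cast; ring, ?_⟩
              push_cast; linear_combination -hu
            · rw [SimpleGraph.Walk.edges_cons, hedg]
              rw [show List.range (0+1) = [0] from rfl, List.range_zero]
              simp only [List.map_cons, List.map_nil, List.cons.injEq, and_true]
              rw [Sym2.eq_iff]
              left
              exact ⟨by push_cast; ring, by push_cast; linear_combination -hu⟩
          · exfalso
            apply hu_not
            rw [hsup]
            refine List.mem_map.mpr ⟨1, List.mem_range.mpr (by omega), ?_⟩
            push_cast; linear_combination -hu
        · -- q decreasing from w; extend downward
          right
          rw [hlen]
          refine ⟨by push_cast; linear_combination hu + hv, ?_, ?_⟩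
          · rw [SimpleGraph.Walk.support_cons, hsup]
            conv_rhs => rw [List.range_succ_eq_map, List.map_cons, List.map_map]
            rw [List.cons_eq_cons]
            refine ⟨by push_cast; ring, ?_⟩
            apply List.map_congr_left
            intro k _
            simp only [Function.comp_apply, Nat.succ_eq_add_one]
            push_cast; linear_combination -hu
          · rw [SimpleGraph.Walk.edges_cons, hedg]
            conv_rhs => rw [List.range_succ_eq_map, List.map_cons, List.map_map]
            rw [List.cons_eq_cons]
            constructor
            · rw [Sym2.eq_iff]
              left
              exact ⟨by push_cast; ring, by push_cast; linear_combination -hu⟩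
            · apply List.map_congr_left
              intro k _
              simp only [Function.comp_apply, Nat.succ_eq_add_one]
              rw [Sym2.eq_iff]
              left
              exact ⟨by push_cast; linear_combination -hu, by push_cast; linear_combination -hu⟩
      · -- (w - u).val = 1, so w = u + 1
        have hw : w = u + 1 := by
          have h1 : w - u = 1 := Fin.ext (by rw [h', val_one_of hn])
          have := sub_eq_iff_eq_add.mp h1
          rw [this]; ring
        rcases ih hq with ⟨hv, hsup, hedg⟩ | ⟨hv, hsup, hedg⟩
        · -- q increasing from w; extend upward
          left
          rw [hlen]
          refine ⟨by push_cast; linear_combination hv + hw, ?_, ?_⟩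
          · rw [SimpleGraph.Walk.support_cons, hsup]
            conv_rhs => rw [List.range_succ_eq_map, List.map_cons, List.map_map]
            rw [List.cons_eq_cons]
            refine ⟨by push_cast; ring, ?_⟩
            apply List.map_congr_left
            intro k _
            simp only [Function.comp_apply, Nat.succ_eq_add_one]
            push_cast; linear_combination hw
          · rw [SimpleGraph.Walk.edges_cons, hedg]
            conv_rhs => rw [List.range_succ_eq_map, List.map_cons, List.map_map]
            rw [List.cons_eq_cons]
            constructor
            · rw [Sym2.eq_iff]
              left
              exact ⟨by push_cast; ring, by push_cast; linear_combination hw⟩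
            · apply List.map_congr_left
              intro k _
              simp only [Function.comp_apply, Nat.succ_eq_add_one]
              rw [Sym2.eq_iff]
              left
              exact ⟨by push_cast; linear_combination hw, by push_cast; linear_combination hw⟩
        · -- q decreasing from w; turning back
          rcases Nat.eq_zero_or_pos q.length with hL | hL
          · rw [hL] at hv hsup hedg
            have hvw : w = v := by push_cast at hv; linear_combination hv
            left
            rw [hlen, hL]
            refine ⟨by push_cast; linear_combination hw - hvw, ?_, ?_⟩
            · rw [SimpleGraph.Walk.support_cons, hsup]
              rw [show List.range (0+1) = [0] from rfl, show List.range (0+1+1) = [0,1] from rfl]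
              simp only [List.map_cons, List.map_nil, List.cons.injEq, and_true]
              refine ⟨by push_cast; ring, ?_⟩
              push_cast; linear_combination hw
            · rw [SimpleGraph.Walk.edges_cons, hedg]
              rw [show List.range (0+1) = [0] from rfl, List.range_zero]
              simp only [List.map_cons, List.map_nil, List.cons.injEq, and_true]
              rw [Sym2.eq_iff]
              left
              exact ⟨by push_cast; ring, by push_cast; linear_combination hw⟩
          · exfalso
            apply hu_not
            rw [hsup]
            refine List.mem_map.mpr ⟨1, List.mem_range.mpr (by omega), ?_⟩
            push_cast; linear_combination hw

/-- The edge set of the arc `u, u+1, …, u+ℓ`. -/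
def arcFinset (u : Fin n) (ℓ : ℕ) : Finset (Sym2 (Fin n)) :=
  (Finset.range ℓ).image (fun k : ℕ => s(u + (k : Fin n), u + (k : Fin n) + 1))

lemma edge_inj (hn : 3 ≤ n) {a b : Fin n} : s(a, a+1) = s(b, b+1) ↔ a = b := by
  constructor
  · intro h
    rcases Sym2.eq_iff.mp h with ⟨h1, _⟩ | ⟨h1, h2⟩
    · exact h1
    · exfalso
      have h3 : ((2:ℕ) : Fin n) = ((0:ℕ) : Fin n) := by
        push_cast
        linear_combination h2 - h1
      have := natCast_inj_of_lt (by omega) (by omega) h3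
      omega
  · rintro rfl; rfl

lemma mem_arcFinset (hn : 3 ≤ n) {u w : Fin n} {ℓ : ℕ} :
    s(w, w+1) ∈ arcFinset u ℓ ↔ ∃ k < ℓ, u + (k : Fin n) = w := by
  simp only [arcFinset, Finset.mem_image, Finset.mem_range]
  constructor
  · rintro ⟨k, hk, hke⟩
    exact ⟨k, hk, (edge_inj hn).mp hke⟩
  · rintro ⟨k, hk, hke⟩
    exact ⟨k, hk, (edge_inj hn).mpr hke⟩

lemma card_arcFinset (hn : 3 ≤ n) {u : Fin n} {ℓ : ℕ} (hℓ : ℓ ≤ n) :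
    (arcFinset u ℓ).card = ℓ := by
  rw [arcFinset, Finset.card_image_of_injOn, Finset.card_range]
  intro k hk k' hk' hkk
  rw [Finset.mem_coe, Finset.mem_range] at hk hk'
  have h1 : u + (k : Fin n) = u + (k' : Fin n) := (edge_inj hn).mp hkk
  exact natCast_inj_of_lt (by omega) (by omega) (add_left_cancel h1)

lemma arc_mem_geodesicPathSets (hn : 3 ≤ n) (u : Fin n) (ℓ : ℕ) (h1 : 1 ≤ ℓ)
    (h2 : ℓ ≤ n/2) : arcFinset u ℓ ∈ (cycleGraph n).geodesicPathSets := by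
  have hn2 : 2 ≤ n := by omega
  have hℓn : ℓ < n := by omega
  refine ⟨u, u + (ℓ : Fin n), arcWalk hn2 u ℓ, ⟨?_, ?_, ?_⟩, ?_⟩
  · rw [SimpleGraph.Walk.isPath_def, arcWalk_support]
    refine List.Nodup.map_on ?_ List.nodup_range
    intro k hk k' hk' hkk
    rw [List.mem_range] at hk hk'
    exact natCast_inj_of_lt (by omega) (by omega) (add_left_cancel hkk)
  · rw [arcWalk_length, dist_eq hn2]
    have e1 : u + (ℓ : Fin n) - u = (ℓ : Fin n) := by ring
    have e2 : u - (u + (ℓ : Fin n)) = -(ℓ : Fin n) := by ring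
    rw [e1, e2]
    have h3 : ((ℓ : Fin n) : ℕ) = ℓ := val_natCast_of_lt hℓn
    have h4 : (ℓ : Fin n) ≠ 0 := by
      intro h0
      rw [h0] at h3
      simp at h3
      omega
    have h5 := val_neg_of_ne_zero h4
    rw [h5, h3]
    omega
  · rw [arcWalk_length]; omega
  · rw [arcWalk_edges, toFinset_map_list, toFinset_range, arcFinset]

lemma geodesic_char (hn : 3 ≤ n) {S : Finset (Sym2 (Fin n))} :
    S ∈ (cycleGraph n).geodesicPathSets ↔
      ∃ (u : Fin n) (ℓ : ℕ), 1 ≤ ℓ ∧ ℓ ≤ n/2 ∧ S = arcFinset u ℓ := by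
  have hn2 : 2 ≤ n := by omega
  constructor
  · rintro ⟨u, v, p, ⟨hpath, hdist, hpos⟩, rfl⟩
    have hhalf : p.length ≤ n / 2 := by
      rw [hdist, dist_eq hn2]
      have := min_le_half (v - u)
      rwa [neg_sub] at this
    rcases path_struct hn2 p hpath with ⟨_, _, hedg⟩ | ⟨hvu, _, hedg⟩
    · exact ⟨u, p.length, hpos, hhalf, by
        rw [hedg, toFinset_map_list, toFinset_range, arcFinset]⟩
    · set ℓ := p.length with hℓ
      refine ⟨v, ℓ, hpos, hhalf, ?_⟩
      rw [hedg, toFinset_map_list, toFinset_range, arcFinset]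
      have key : ∀ k, k < ℓ → s(v + ((k:ℕ) : Fin n), v + ((k:ℕ) : Fin n) + 1)
          = s(u - ((ℓ-1-k : ℕ) : Fin n), u - ((ℓ-1-k : ℕ) : Fin n) - 1) := by
        intro k hk
        have hcast : ((ℓ-1-k : ℕ) : Fin n) + ((k:ℕ) : Fin n) + 1 = ((ℓ:ℕ) : Fin n) := by
          rw [show ((ℓ:ℕ):Fin n) = (((ℓ-1-k) + (k+1) : ℕ) : Fin n) by congr 1; omega]
          push_cast; ring
        rw [Sym2.eq_iff]
        right
        constructor
        · linear_combination hcast - hvu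
        · linear_combination hcast - hvu
      ext x
      simp only [Finset.mem_image, Finset.mem_range]
      constructor
      · rintro ⟨k, hk, rfl⟩
        refine ⟨ℓ-1-k, by omega, ?_⟩
        have := key (ℓ-1-k) (by omega)
        rw [show ℓ-1-(ℓ-1-k) = k by omega] at this
        exact this
      · rintro ⟨k, hk, rfl⟩
        exact ⟨ℓ-1-k, by omega, (key k hk).symm⟩
  · rintro ⟨u, ℓ, h1, h2, rfl⟩
    exact arc_mem_geodesicPathSets hn u ℓ h1 h2

lemma arc_eq_iff (hn : 3 ≤ n) {u u' : Fin n} {ℓ ℓ' : ℕ} (h1 : 1 ≤ ℓ) (h2 : ℓ ≤ n/2)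
    (h1' : 1 ≤ ℓ') (h2' : ℓ' ≤ n/2) (heq : arcFinset u ℓ = arcFinset u' ℓ') :
    u = u' ∧ ℓ = ℓ' := by
  have hc : ℓ = ℓ' := by
    have := card_arcFinset hn (u := u) (ℓ := ℓ) (by omega)
    have h' := card_arcFinset hn (u := u') (ℓ := ℓ') (by omega)
    rw [← this, ← h', heq]
  subst hc
  refine ⟨?_, rfl⟩
  have m1 : s(u', u'+1) ∈ arcFinset u ℓ := by
    rw [heq, mem_arcFinset hn]
    exact ⟨0, by omega, by push_cast; ring⟩
  have m2 : s(u, u+1) ∈ arcFinset u' ℓ := by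
    rw [← heq, mem_arcFinset hn]
    exact ⟨0, by omega, by push_cast; ring⟩
  rw [mem_arcFinset hn] at m1 m2
  obtain ⟨k, hk, hke⟩ := m1
  obtain ⟨k', hk', hke'⟩ := m2
  have hsum : u + ((k + k' : ℕ) : Fin n) = u := by
    push_cast
    linear_combination hke + hke'
  have h0 : ((k + k' : ℕ) : Fin n) = ((0 : ℕ) : Fin n) := by
    push_cast at hsum ⊢
    linear_combination hsum
  have hkk : k + k' = 0 := natCast_inj_of_lt (by omega) (by omega) h0
  have : k = 0 := by omega
  subst this
  rw [← hke]; push_cast; ring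

lemma edge_rep (hn : 3 ≤ n) {e : Sym2 (Fin n)} (he : e ∈ (cycleGraph n).edgeSet) :
    ∃ w : Fin n, e = s(w, w+1) := by
  induction e with
  | _ a b =>
    rw [SimpleGraph.mem_edgeSet] at he
    rcases cycleGraph_adj'.mp he with h' | h'
    · have ha : a = b + 1 := by
        have h1 : a - b = 1 := Fin.ext (by rw [h', val_one_of (by omega)])
        have := sub_eq_iff_eq_add.mp h1
        rw [this]; ring
      exact ⟨b, by rw [Sym2.eq_swap, ha]⟩
    · have hb : b = a + 1 := by
        have h1 : b - a = 1 := Fin.ext (by rw [h', val_one_of (by omega)])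
        have := sub_eq_iff_eq_add.mp h1
        rw [this]; ring
      exact ⟨a, by rw [hb]⟩

end Walks

lemma gauss_sum (d : ℕ) : ∑ ℓ ∈ Finset.Icc 1 d, ℓ = d * (d + 1) / 2 := by
  induction d with
  | zero => simp
  | succ d ih =>
      rw [Finset.sum_Icc_succ_top (by omega), ih]
      have hx : d * (d + 1) % 2 = 0 := Nat.even_iff.mp (Nat.even_mul_succ_self d)
      have hy : d * (d + 1) + 2 * (d + 1) = (d + 1) * (d + 1 + 1) := by ring
      omega

end CycleAux

open CycleAux

/-- For `n ≥ 3` and `d = n / 2` (the diameter of the cycle on `n` vertices), every edge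
of the cycle lies in exactly `d(d+1)/2` geodesic paths. -/
theorem statement_3 (n : ℕ) (hn : 3 ≤ n) (e : Sym2 (Fin n))
    (he : e ∈ (SimpleGraph.cycleGraph n).edgeSet) :
    {S ∈ (SimpleGraph.cycleGraph n).geodesicPathSets | e ∈ S}.ncard
      = (n / 2) * (n / 2 + 1) / 2 := by
  haveI : NeZero n := ⟨by omega⟩
  classical
  obtain ⟨w, rfl⟩ := edge_rep hn he
  set T : Finset (Finset (Sym2 (Fin n))) :=
    ((Finset.Icc 1 (n/2)).sigma fun ℓ => Finset.range ℓ).image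
      (fun q => arcFinset (w - ((q.2 : ℕ) : Fin n)) q.1) with hT
  have hset : {S ∈ (SimpleGraph.cycleGraph n).geodesicPathSets | s(w, w+1) ∈ S} = ↑T := by
    ext S
    simp only [Set.mem_setOf_eq, hT, Finset.mem_coe, Finset.mem_image,
      Finset.mem_sigma, Finset.mem_Icc, Finset.mem_range]
    constructor
    · rintro ⟨hgeo, heS⟩
      obtain ⟨u, ℓ, h1, h2, rfl⟩ := (geodesic_char hn).mp hgeo
      obtain ⟨k, hk, hku⟩ := (mem_arcFinset hn).mp heS
      refine ⟨⟨ℓ, k⟩, ⟨⟨h1, h2⟩, hk⟩, ?_⟩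
      have huw : w - ((k : ℕ) : Fin n) = u := by linear_combination -hku
      rw [huw]
    · rintro ⟨⟨ℓ, k⟩, ⟨⟨h1, h2⟩, hk⟩, rfl⟩
      refine ⟨arc_mem_geodesicPathSets hn _ ℓ h1 h2, ?_⟩
      rw [mem_arcFinset hn]
      exact ⟨k, hk, by ring⟩
  rw [hset, Set.ncard_coe_finset, hT]
  have hinj : Set.InjOn (fun q : (_ : ℕ) × ℕ => arcFinset (w - ((q.2 : ℕ) : Fin n)) q.1)
      ((Finset.Icc 1 (n/2)).sigma fun ℓ => Finset.range ℓ) := by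
    rintro ⟨ℓ, k⟩ hq ⟨ℓ', k'⟩ hq' heq
    simp only [Finset.mem_coe, Finset.mem_sigma, Finset.mem_Icc, Finset.mem_range] at hq hq'
    obtain ⟨⟨hq1, hq2⟩, hq3⟩ := hq
    obtain ⟨⟨hq1', hq2'⟩, hq3'⟩ := hq'
    dsimp only at heq
    obtain ⟨hueq, hleq⟩ := arc_eq_iff hn hq1 hq2 hq1' hq2' heq
    subst hleq
    have hcast : ((k:ℕ) : Fin n) = ((k':ℕ) : Fin n) := by linear_combination -hueq
    have hkk : k = k' := natCast_inj_of_lt (by omega) (by omega) hcast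
    exact congrArg _ hkk
  rw [Finset.card_image_of_injOn hinj, Finset.card_sigma]
  simp only [Finset.card_range]
  exact gauss_sum (n/2)
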